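/- Let α ∈ (1,2) and for each integer n ≥ 0 set a_n = (α+1)^{n/(1-α)} · Γ(α/(α+1)) · Γ(1 + (α+1)n/(α-1)) / ( n! · Γ(α/(α+1) + n/(α-1)) · Γ(1 + n/(α-1)) ). Then a_n ~ ( Γ(α/(α+1)) · √(α²-1) / ( 2π · (α-1)^{1/(α+1)} ) ) · c_α^{-n} · n^{-α/(α+1)} as n → ∞, where c_α = (α-1)(α+1)^{α/(1-α)}; i.e. the ratio of a_n to the right-hand side tends to 1. (These a_n are the Taylor coefficients of the moment generating function of 𝒳_α = 𝒜_α^{1/(1-α)}.) -/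

import Mathlib

open Filter

open Real Topology


lemma wendel_upper {x a : ℝ} (hx : 0 < x) (ha : 0 ≤ a) (ha1 : a ≤ 1) :
    Gamma (x + a) ≤ Gamma x * x ^ a := by
  rcases eq_or_lt_of_le ha with h0 | h0
  · simp [← h0]
  rcases eq_or_lt_of_le ha1 with h1 | h1
  · rw [h1, Real.rpow_one, Gamma_add_one (ne_of_gt hx), mul_comm]
  have key := Real.Gamma_mul_add_mul_le_rpow_Gamma_mul_rpow_Gamma (s := x) (t := x + 1)
    hx (by linarith) (a := 1 - a) (b := a) (by linarith) h0 (by ring)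
  have h2 : (1 - a) * x + a * (x + 1) = x + a := by ring
  rw [h2, Gamma_add_one (ne_of_gt hx)] at key
  calc Gamma (x + a) ≤ Gamma x ^ (1 - a) * (x * Gamma x) ^ a := key
    _ = Gamma x * x ^ a := by
        rw [Real.mul_rpow (le_of_lt hx) (le_of_lt (Gamma_pos_of_pos hx)),
          ← mul_assoc, mul_comm (Gamma x ^ (1-a)), mul_assoc,
          ← Real.rpow_add (Gamma_pos_of_pos hx)]
        norm_num
        exact mul_comm _ _

lemma wendel_lower {x a : ℝ} (hx : 0 < x) (ha : 0 ≤ a) (ha1 : a ≤ 1) :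
    Gamma x * x * (x + a) ^ (a - 1) ≤ Gamma (x + a) := by
  rcases eq_or_lt_of_le ha with h0 | h0
  · rw [← h0]
    rw [add_zero, zero_sub, Real.rpow_neg_one]
    rw [mul_assoc, mul_inv_cancel₀ (ne_of_gt hx), mul_one]
  rcases eq_or_lt_of_le ha1 with h1 | h1
  · rw [h1, sub_self, Real.rpow_zero, mul_one, Gamma_add_one (ne_of_gt hx), mul_comm]
  have hxa : 0 < x + a := by linarith
  have hG : 0 < Gamma (x + a) := Gamma_pos_of_pos hxa
  have key := Real.Gamma_mul_add_mul_le_rpow_Gamma_mul_rpow_Gamma (s := x + a) (t := x + a + 1)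
    hxa (by linarith) (a := a) (b := 1 - a) h0 (by linarith) (by ring)
  have h2 : a * (x + a) + (1 - a) * (x + a + 1) = x + 1 := by ring
  rw [h2, Gamma_add_one (ne_of_gt hx), Gamma_add_one (ne_of_gt hxa)] at key
  -- key : x * Gamma x ≤ Gamma (x+a) ^ a * ((x+a) * Gamma (x+a)) ^ (1-a)
  have h3 : Gamma (x+a) ^ a * ((x+a) * Gamma (x+a)) ^ (1-a) = Gamma (x+a) * (x+a) ^ (1-a) := by
    rw [Real.mul_rpow (le_of_lt hxa) (le_of_lt hG), ← mul_assoc,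
      mul_comm (Gamma (x+a) ^ a), mul_assoc, ← Real.rpow_add hG]
    norm_num
    exact mul_comm _ _
  rw [h3] at key
  have h4 : (x + a) ^ (a - 1) = ((x + a) ^ (1 - a))⁻¹ := by
    rw [← Real.rpow_neg (le_of_lt hxa)]
    norm_num
  have hp : (0:ℝ) < (x + a) ^ (1 - a) := Real.rpow_pos_of_pos hxa _
  rw [h4, mul_inv_le_iff₀ hp, mul_comm (Gamma x) x]
  exact key

lemma wendel_tendsto {a : ℝ} (ha : 0 ≤ a) (ha1 : a ≤ 1) :
    Tendsto (fun x : ℝ => Gamma (x + a) / (Gamma x * x ^ a)) atTop (𝓝 1) := by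
  have hL : Tendsto (fun x : ℝ => (x / (x + a)) ^ (1 - a)) atTop (𝓝 1) := by
    have h1 : Tendsto (fun x : ℝ => x / (x + a)) atTop (𝓝 1) := by
      have := Filter.Tendsto.div_atTop (f := fun _ : ℝ => a) (l := atTop)
        tendsto_const_nhds (tendsto_atTop_add_const_right atTop a tendsto_id)
      have h2 : Tendsto (fun x : ℝ => 1 - a / (x + a)) atTop (𝓝 (1 - 0)) :=
        tendsto_const_nhds.sub this
      rw [sub_zero] at h2
      refine h2.congr' ?_
      filter_upwards [eventually_gt_atTop (max 0 (-a))] with x hx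
      have hxa : 0 < x + a := by
        have := lt_of_le_of_lt (le_max_right 0 (-a)) hx
        linarith
      field_simp
      ring
    have hc : ContinuousAt (fun y : ℝ => y ^ (1 - a)) 1 :=
      (Real.continuousAt_rpow_const 1 (1-a) (Or.inl one_ne_zero))
    have := hc.tendsto.comp h1
    simpa [Function.comp_def] using this
  refine tendsto_of_tendsto_of_tendsto_of_le_of_le' hL tendsto_const_nhds ?_ ?_
  · filter_upwards [eventually_gt_atTop (0:ℝ)] with x hx
    have hxa : 0 < x + a := by linarith
    have hG : 0 < Gamma x := Gamma_pos_of_pos hx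
    have hden : 0 < Gamma x * x ^ a := by positivity
    rw [le_div_iff₀ hden]
    have key := wendel_lower hx ha ha1
    calc (x / (x+a)) ^ (1-a) * (Gamma x * x ^ a)
        = Gamma x * x * (x + a) ^ (a - 1) := by
          rw [Real.div_rpow (le_of_lt hx) (le_of_lt hxa)]
          rw [show a - 1 = -(1-a) by ring, Real.rpow_neg (le_of_lt hxa)]
          rw [show (1:ℝ) - a = 1 + -a by ring, Real.rpow_add hx, Real.rpow_one,
            Real.rpow_neg (le_of_lt hx)]
          field_simp
      _ ≤ Gamma (x + a) := key
  · filter_upwards [eventually_gt_atTop (0:ℝ)] with x hx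
    have hG : 0 < Gamma x := Gamma_pos_of_pos hx
    have hden : 0 < Gamma x * x ^ a := by positivity
    rw [div_le_one hden]
    exact wendel_upper hx ha ha1

noncomputable def gStir (y : ℝ) : ℝ := Real.sqrt (2*π*y) * (y / exp 1) ^ y

lemma gStir_pos {y : ℝ} (hy : 0 < y) : 0 < gStir y := by
  have h : 0 < y / exp 1 := by positivity
  have := Real.rpow_pos_of_pos h y
  have h2 : 0 < Real.sqrt (2*π*y) := Real.sqrt_pos.mpr (by positivity)
  exact mul_pos h2 this

lemma gStir_eq {y : ℝ} (hy : 0 < y) : gStir y = Real.sqrt (2*π*y) * (y ^ y * exp (-y)) := by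
  rw [gStir, Real.div_rpow hy.le (exp_pos 1).le, Real.exp_one_rpow, Real.exp_neg,
    div_eq_mul_inv]

lemma fact_stirling : Tendsto (fun m : ℕ => (m.factorial : ℝ) / gStir m) atTop (𝓝 1) := by
  have h := Stirling.tendsto_stirlingSeq_sqrt_pi
  have hπ : (0:ℝ) < π := pi_pos
  have h2 : Tendsto (fun m : ℕ => Stirling.stirlingSeq m / Real.sqrt π) atTop
      (𝓝 (Real.sqrt π / Real.sqrt π)) := h.div_const _
  rw [div_self (by positivity : Real.sqrt π ≠ 0)] at h2
  refine h2.congr' ?_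
  filter_upwards [eventually_gt_atTop 0] with m hm
  have hm' : (0:ℝ) < m := by exact_mod_cast hm
  rw [Stirling.stirlingSeq, gStir]
  rw [show (2*π*(m:ℝ)) = π * (2*m) by ring, Real.sqrt_mul hπ.le,
    ← Real.rpow_natCast ((m:ℝ)/exp 1) m]
  field_simp

lemma core_log_bounds {M θ : ℝ} (hM : 1 ≤ M) (hθ0 : 0 ≤ θ) (hθ1 : θ ≤ 1) :
    M * log M + θ * log M + θ ≤ (M + θ) * log (M + θ) ∧
      (M + θ) * log (M + θ) ≤ M * log M + θ * log M + θ + 1/M := by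
  have hM0 : 0 < M := by linarith
  have hy0 : 0 < M + θ := by linarith
  have hsplit : log (M + θ) = log M + log ((M+θ)/M) := by
    rw [Real.log_div (ne_of_gt hy0) (ne_of_gt hM0)]; ring
  have hu : log ((M+θ)/M) ≤ θ/M := by
    have := Real.log_le_sub_one_of_pos (show (0:ℝ) < (M+θ)/M by positivity)
    have h3 : (M+θ)/M - 1 = θ/M := by field_simp; ring
    linarith
  have hl : 1 - M/(M+θ) ≤ log ((M+θ)/M) := by
    have := Real.log_le_sub_one_of_pos (show (0:ℝ) < M/(M+θ) by positivity)
    have h4 : log (M/(M+θ)) = - log ((M+θ)/M) := by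
      rw [Real.log_div (ne_of_gt hM0) (ne_of_gt hy0),
        Real.log_div (ne_of_gt hy0) (ne_of_gt hM0)]; ring
    rw [h4] at this
    linarith
  constructor
  · have h5 : (M + θ) * (1 - M/(M+θ)) = θ := by field_simp; ring
    have h6 : (M + θ) * (1 - M/(M+θ)) ≤ (M + θ) * log ((M+θ)/M) :=
      mul_le_mul_of_nonneg_left hl hy0.le
    rw [hsplit]
    nlinarith
  · have h6 : (M + θ) * log ((M+θ)/M) ≤ (M + θ) * (θ/M) :=
      mul_le_mul_of_nonneg_left hu hy0.le
    have h7 : (M + θ) * (θ/M) = θ + θ^2/M := by field_simp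
    have h8 : θ^2/M ≤ 1/M := by
      gcongr
      nlinarith
    rw [hsplit]
    nlinarith

lemma gStir_bounds {M θ : ℝ} (hM : 1 ≤ M) (hθ0 : 0 ≤ θ) (hθ1 : θ ≤ 1) :
    gStir M * M ^ θ ≤ gStir (M + θ) ∧
      gStir (M + θ) ≤ gStir M * M ^ θ * Real.sqrt ((M+1)/M) * exp (1/M) := by
  have hM0 : 0 < M := by linarith
  have hy0 : 0 < M + θ := by linarith
  obtain ⟨hc1, hc2⟩ := core_log_bounds hM hθ0 hθ1
  have hyy : (M + θ) ^ (M + θ) = exp ((M + θ) * log (M + θ)) := by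
    rw [Real.rpow_def_of_pos hy0, mul_comm]
  have hMM : M ^ M = exp (M * log M) := by rw [Real.rpow_def_of_pos hM0, mul_comm]
  have hMθ : M ^ θ = exp (θ * log M) := by rw [Real.rpow_def_of_pos hM0, mul_comm]
  have hylow : M ^ M * M ^ θ * exp θ ≤ (M + θ) ^ (M + θ) := by
    rw [hyy, hMM, hMθ, ← Real.exp_add, ← Real.exp_add]
    exact Real.exp_le_exp.mpr hc1
  have hyhigh : (M + θ) ^ (M + θ) ≤ M ^ M * M ^ θ * exp θ * exp (1/M) := by
    rw [hyy, hMM, hMθ, ← Real.exp_add, ← Real.exp_add, ← Real.exp_add]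
    exact Real.exp_le_exp.mpr (by linarith)
  have hsqle : Real.sqrt (2*π*M) ≤ Real.sqrt (2*π*(M+θ)) := by
    apply Real.sqrt_le_sqrt; nlinarith [pi_pos]
  have hsqhi : Real.sqrt (2*π*(M+θ)) ≤ Real.sqrt (2*π*M) * Real.sqrt ((M+1)/M) := by
    rw [← Real.sqrt_mul (by positivity)]
    apply Real.sqrt_le_sqrt
    rw [show 2*π*M*((M+1)/M) = 2*π*(M+1) by field_simp]
    nlinarith [pi_pos]
  have hexpy : exp (-(M+θ)) = exp (-M) * (exp θ)⁻¹ := by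
    rw [← Real.exp_neg, ← Real.exp_add]; ring_nf
  constructor
  · rw [gStir_eq hy0, gStir_eq hM0]
    have key : Real.sqrt (2*π*M) * ((M^M * exp (-M)) * M ^ θ)
        ≤ Real.sqrt (2*π*(M+θ)) * ((M+θ)^(M+θ) * exp (-(M+θ))) := by
      rw [hexpy]
      have h1 : (M^M * exp (-M)) * M ^ θ
          = (M^M * M^θ * exp θ) * (exp (-M) * (exp θ)⁻¹) := by
        have he : exp θ * (exp θ)⁻¹ = 1 := mul_inv_cancel₀ (exp_ne_zero θ)
        calc (M^M * exp (-M)) * M ^ θ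
            = (M^M * M^θ * exp (-M)) * (exp θ * (exp θ)⁻¹) := by rw [he]; ring
          _ = (M^M * M^θ * exp θ) * (exp (-M) * (exp θ)⁻¹) := by ring
      rw [h1]
      exact mul_le_mul hsqle (mul_le_mul_of_nonneg_right hylow (by positivity))
        (by positivity) (Real.sqrt_nonneg _)
    calc Real.sqrt (2*π*M) * (M^M * exp (-M)) * M^θ
        = Real.sqrt (2*π*M) * ((M^M * exp (-M)) * M ^ θ) := by ring
      _ ≤ _ := key
  · rw [gStir_eq hy0, gStir_eq hM0]
    have h1 : (M+θ)^(M+θ) * exp (-(M+θ))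
        ≤ (M^M * exp (-M)) * M^θ * exp (1/M) := by
      rw [hexpy]
      calc (M+θ)^(M+θ) * (exp (-M) * (exp θ)⁻¹)
          ≤ (M ^ M * M ^ θ * exp θ * exp (1/M)) * (exp (-M) * (exp θ)⁻¹) := by
            exact mul_le_mul_of_nonneg_right hyhigh (by positivity)
        _ = (M^M * exp (-M)) * M^θ * exp (1/M) := by
            have he : exp θ * (exp θ)⁻¹ = 1 := mul_inv_cancel₀ (exp_ne_zero θ)
            calc (M ^ M * M ^ θ * exp θ * exp (1/M)) * (exp (-M) * (exp θ)⁻¹)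
                = (M^M * exp (-M)) * M^θ * exp (1/M) * (exp θ * (exp θ)⁻¹) := by ring
              _ = (M^M * exp (-M)) * M^θ * exp (1/M) := by rw [he]; ring
    calc Real.sqrt (2*π*(M+θ)) * ((M+θ)^(M+θ) * exp (-(M+θ)))
        ≤ (Real.sqrt (2*π*M) * Real.sqrt ((M+1)/M)) * ((M^M * exp (-M)) * M^θ * exp (1/M)) := by
          have hnn : 0 ≤ (M+θ)^(M+θ) * exp (-(M+θ)) := by
            have := Real.rpow_pos_of_pos hy0 (M+θ); positivity
          exact mul_le_mul hsqhi h1 hnn (by positivity)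
        _ = Real.sqrt (2*π*M) * (M^M * exp (-M)) * M^θ * Real.sqrt ((M+1)/M) * exp (1/M) := by
          ring

lemma aux_tendsto_u : Tendsto (fun m : ℕ => ((m:ℝ)+1)/m) atTop (𝓝 1) := by
  have h : Tendsto (fun m : ℕ => 1 + 1/(m:ℝ)) atTop (𝓝 (1 + 0)) :=
    tendsto_const_nhds.add tendsto_one_div_atTop_nhds_zero_nat
  rw [add_zero] at h
  refine h.congr' ?_
  filter_upwards [eventually_gt_atTop 0] with m hm
  have : ((m:ℝ)) ≠ 0 := by positivity
  field_simp

lemma aux_tendsto_l : Tendsto (fun m : ℕ =>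
    ((m:ℝ)+1)/((m:ℝ)+2) * (Real.sqrt (((m:ℝ)+1)/m))⁻¹ * exp (-(1/(m:ℝ))))
    atTop (𝓝 1) := by
  have h1 : Tendsto (fun m : ℕ => ((m:ℝ)+1)/((m:ℝ)+2)) atTop (𝓝 1) := by
    have hz : Tendsto (fun m : ℕ => 1/((m:ℝ)+2)) atTop (𝓝 0) := by
      exact (tendsto_inv_atTop_zero.comp (tendsto_atTop_add_const_right atTop (2:ℝ)
        tendsto_natCast_atTop_atTop)).congr fun m => by simp [Function.comp, one_div]
    have h : Tendsto (fun m : ℕ => 1 - 1/((m:ℝ)+2)) atTop (𝓝 (1 - 0)) :=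
      tendsto_const_nhds.sub hz
    rw [sub_zero] at h
    refine h.congr fun m => ?_
    have : ((m:ℝ)+2) ≠ 0 := by positivity
    field_simp
    ring
  have h2 : Tendsto (fun m : ℕ => (Real.sqrt (((m:ℝ)+1)/m))⁻¹) atTop (𝓝 1) := by
    have hc : ContinuousAt (fun x : ℝ => (Real.sqrt x)⁻¹) 1 := by
      apply ContinuousAt.inv₀ (Real.continuous_sqrt.continuousAt)
      simp
    have := hc.tendsto.comp aux_tendsto_u
    simp only [Function.comp_def] at this
    convert this using 2
    norm_num
  have h3 : Tendsto (fun m : ℕ => exp (-(1/(m:ℝ)))) atTop (𝓝 1) := by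
    have : Tendsto (fun m : ℕ => -(1/(m:ℝ))) atTop (𝓝 0) := by
      simpa using (tendsto_one_div_atTop_nhds_zero_nat (𝕜 := ℝ)).neg
    have := (Real.continuous_exp.continuousAt (x := 0)).tendsto.comp this
    simpa [Function.comp_def] using this
  have := (h1.mul h2).mul h3
  simpa using this

lemma gamma_stirling : Tendsto (fun y : ℝ => Gamma (1 + y) / gStir y) atTop (𝓝 1) := by
  set s : ℕ → ℝ := fun m => (m.factorial : ℝ) / gStir m with hs
  have hsl : Tendsto (fun m : ℕ => s m *
      (((m:ℝ)+1)/((m:ℝ)+2) * (Real.sqrt (((m:ℝ)+1)/m))⁻¹ * exp (-(1/(m:ℝ))))) atTop (𝓝 1) := by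
    simpa using fact_stirling.mul aux_tendsto_l
  have hsu : Tendsto (fun m : ℕ => s m * (((m:ℝ)+1)/m)) atTop (𝓝 1) := by
    simpa using fact_stirling.mul aux_tendsto_u
  refine tendsto_of_tendsto_of_tendsto_of_le_of_le'
    (hsl.comp tendsto_nat_floor_atTop) (hsu.comp tendsto_nat_floor_atTop) ?_ ?_
  · filter_upwards [eventually_ge_atTop (1:ℝ)] with y hy
    set m := ⌊y⌋₊ with hm
    have hm1 : 1 ≤ m := Nat.le_floor (by exact_mod_cast hy)
    set M : ℝ := (m:ℝ) with hM
    have hM1 : 1 ≤ M := by rw [hM]; exact_mod_cast hm1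
    have hM0 : 0 < M := by linarith
    set θ : ℝ := y - M with hθ
    have hθ0 : 0 ≤ θ := by
      have := Nat.floor_le (by linarith : (0:ℝ) ≤ y)
      simp only [hθ, hM, hm]; linarith
    have hθ1 : θ ≤ 1 := by
      have := (Nat.lt_floor_add_one y).le
      simp only [hθ, hM, hm]; linarith
    have hyMθ : y = M + θ := by ring
    have hy0 : (0:ℝ) < y := by linarith
    -- Gamma lower bound
    have hGlow : (m.factorial : ℝ) * (M+1) * ((M+2)) ^ (θ-1) ≤ Gamma (1 + y) := by
      have h := wendel_lower (x := M + 1) (a := θ) (by linarith) hθ0 hθ1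
      rw [Real.Gamma_nat_eq_factorial] at h
      have h2 : (M + 2) ^ (θ-1) ≤ (M + 1 + θ) ^ (θ-1) :=
        Real.rpow_le_rpow_of_nonpos (by linarith) (by linarith) (by linarith)
      have h3 : (1:ℝ) + y = M + 1 + θ := by rw [hyMθ]; ring
      rw [h3]
      calc (m.factorial : ℝ) * (M+1) * (M+2) ^ (θ-1)
          ≤ (m.factorial : ℝ) * (M+1) * (M+1+θ) ^ (θ-1) := by
            have : (0:ℝ) ≤ (m.factorial : ℝ) * (M+1) := by positivity
            exact mul_le_mul_of_nonneg_left h2 this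
        _ ≤ Gamma (M + 1 + θ) := h
    -- Gamma upper bound
    have hGhigh : Gamma (1 + y) ≤ (m.factorial : ℝ) * (M+1) ^ θ := by
      have h := wendel_upper (x := M + 1) (a := θ) (by linarith) hθ0 hθ1
      rw [Real.Gamma_nat_eq_factorial] at h
      have h3 : (1:ℝ) + y = M + 1 + θ := by rw [hyMθ]; ring
      rw [h3]
      exact h
    obtain ⟨hg1, hg2⟩ := gStir_bounds hM1 hθ0 hθ1
    rw [← hyMθ] at hg1 hg2
    have hgsM : 0 < gStir M := gStir_pos hM0
    have hgsy : 0 < gStir y := gStir_pos hy0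
    have hMθpos : (0:ℝ) < M ^ θ := Real.rpow_pos_of_pos hM0 _
    -- lower bound for the ratio
    have key : s m * (((M+1))/((M+2)) * (Real.sqrt (((M+1))/M))⁻¹ * exp (-(1/M)))
        ≤ Gamma (1+y) / gStir y := by
      have hnum : (m.factorial : ℝ) * (M+1) * M ^ θ / (M+2) ≤ Gamma (1+y) := by
        refine le_trans ?_ hGlow
        rw [div_le_iff₀ (by linarith : (0:ℝ) < M + 2)]
        have h4 : (M+2) ^ (θ-1) = (M+2) ^ θ / (M+2) := by
          rw [Real.rpow_sub (by linarith), Real.rpow_one]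
        rw [h4]
        have h5 : M ^ θ ≤ (M+2) ^ θ := Real.rpow_le_rpow hM0.le (by linarith) hθ0
        calc (m.factorial : ℝ) * (M+1) * M ^ θ
            ≤ (m.factorial : ℝ) * (M+1) * (M+2) ^ θ := by
              have : (0:ℝ) ≤ (m.factorial : ℝ) * (M+1) := by positivity
              exact mul_le_mul_of_nonneg_left h5 this
          _ = (m.factorial : ℝ) * (M+1) * ((M+2)^θ / (M+2)) * (M+2) := by
              field_simp
      have hsq : 0 < Real.sqrt ((M+1)/M) := Real.sqrt_pos.mpr (by positivity)
      have heq : s m * ((M+1)/(M+2) * (Real.sqrt ((M+1)/M))⁻¹ * exp (-(1/M)))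
          = ((m.factorial : ℝ) * (M+1) * M ^ θ / (M+2)) /
            (gStir M * M ^ θ * Real.sqrt ((M+1)/M) * exp (1/M)) := by
        rw [Real.exp_neg, hs]
        field_simp
        ring
        exact mul_inv_cancel₀ hgsM.ne'
      rw [heq]
      exact div_le_div₀ (Gamma_pos_of_pos (by linarith : (0:ℝ) < 1 + y)).le hnum hgsy hg2
    simpa only [Function.comp] using key
  · filter_upwards [eventually_ge_atTop (1:ℝ)] with y hy
    set m := ⌊y⌋₊ with hm
    have hm1 : 1 ≤ m := Nat.le_floor (by exact_mod_cast hy)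
    set M : ℝ := (m:ℝ) with hM
    have hM1 : 1 ≤ M := by rw [hM]; exact_mod_cast hm1
    have hM0 : 0 < M := by linarith
    set θ : ℝ := y - M with hθ
    have hθ0 : 0 ≤ θ := by
      have := Nat.floor_le (by linarith : (0:ℝ) ≤ y)
      simp only [hθ, hM, hm]; linarith
    have hθ1 : θ ≤ 1 := by
      have := (Nat.lt_floor_add_one y).le
      simp only [hθ, hM, hm]; linarith
    have hyMθ : y = M + θ := by ring
    have hy0 : (0:ℝ) < y := by linarith
    have hGhigh : Gamma (1 + y) ≤ (m.factorial : ℝ) * (M+1) ^ θ := by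
      have h := wendel_upper (x := M + 1) (a := θ) (by linarith) hθ0 hθ1
      rw [Real.Gamma_nat_eq_factorial] at h
      have h3 : (1:ℝ) + y = M + 1 + θ := by rw [hyMθ]; ring
      rw [h3]
      exact h
    obtain ⟨hg1, _⟩ := gStir_bounds hM1 hθ0 hθ1
    rw [← hyMθ] at hg1
    have hgsM : 0 < gStir M := gStir_pos hM0
    have hgsy : 0 < gStir y := gStir_pos hy0
    have hMθpos : (0:ℝ) < M ^ θ := Real.rpow_pos_of_pos hM0 _
    have key : Gamma (1+y) / gStir y ≤ s m * ((M+1)/M) := by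
      have step1 : Gamma (1+y) / gStir y
          ≤ ((m.factorial : ℝ) * (M+1) ^ θ) / (gStir M * M ^ θ) := by
        refine div_le_div₀ ?_ hGhigh (by positivity) hg1
        have := Real.rpow_pos_of_pos (show (0:ℝ) < M+1 by linarith) θ
        positivity
      have step2 : ((m.factorial : ℝ) * (M+1) ^ θ) / (gStir M * M ^ θ)
          = s m * ((M+1)/M) ^ θ := by
        rw [Real.div_rpow (by linarith) hM0.le, hs]
        field_simp
        exact (div_self hgsM.ne').symm
      have step3 : ((M+1)/M) ^ θ ≤ (M+1)/M := by
        have hb : (1:ℝ) ≤ (M+1)/M := by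
          rw [le_div_iff₀ hM0]; linarith
        have := Real.rpow_le_rpow_of_exponent_le hb hθ1
        rwa [Real.rpow_one] at this
      have hsm : 0 ≤ s m := by
        rw [hs]
        have := gStir_pos hM0
        positivity
      calc Gamma (1+y) / gStir y ≤ s m * ((M+1)/M) ^ θ := by rw [← step2]; exact step1
        _ ≤ s m * ((M+1)/M) := mul_le_mul_of_nonneg_left step3 hsm
    simpa only [Function.comp] using key

lemma log_gStir {y : ℝ} (hy : 0 < y) :
    log (gStir y) = (Real.log 2 + log π + log y)/2 + y * (log y - 1) := by
  rw [gStir]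
  rw [Real.log_mul (by positivity) (ne_of_gt (Real.rpow_pos_of_pos (by positivity) _))]
  rw [Real.log_sqrt (by positivity), Real.log_rpow (by positivity),
    Real.log_div (ne_of_gt hy) (exp_ne_zero 1), Real.log_exp,
    Real.log_mul (by positivity) (ne_of_gt hy), Real.log_mul (by norm_num) (ne_of_gt pi_pos)]

lemma key_ident {α t : ℝ} (hα1 : 1 < α) (hα2 : α < 2) (ht : 1 ≤ t) :
    (α+1) ^ (t/(1-α)) * gStir ((α+1)/(α-1)*t) * (1/(α-1)*t)
      = Real.sqrt (α^2-1) / (2*π*(α-1) ^ ((1:ℝ)/(α+1))) * ((α-1)*(α+1)^(α/(1-α))) ^ (-t)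
        * t ^ (-(α/(α+1))) * gStir t * (1/(α-1)*t) ^ (α/(α+1)) * gStir (1/(α-1)*t) ^ 2 := by
  have ha : 0 < α - 1 := by linarith
  have hb : 0 < α + 1 := by linarith
  have ht0 : 0 < t := by linarith
  have hγ : 0 < (α+1)/(α-1) * t := by positivity
  have hβ : 0 < 1/(α-1) * t := by positivity
  have hCa : 0 < (α-1)*(α+1)^(α/(1-α)) := by
    have := Real.rpow_pos_of_pos hb (α/(1-α)); positivity
  have hgγ := gStir_pos hγ
  have hgβ := gStir_pos hβ
  have hgt := gStir_pos ht0
  have hsq : 0 < Real.sqrt (α^2-1) := Real.sqrt_pos.mpr (by nlinarith)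
  have hL : 0 < (α+1) ^ (t/(1-α)) * gStir ((α+1)/(α-1)*t) * (1/(α-1)*t) := by
    have := Real.rpow_pos_of_pos hb (t/(1-α)); positivity
  have hR : 0 < Real.sqrt (α^2-1) / (2*π*(α-1) ^ ((1:ℝ)/(α+1))) * ((α-1)*(α+1)^(α/(1-α))) ^ (-t)
      * t ^ (-(α/(α+1))) * gStir t * (1/(α-1)*t) ^ (α/(α+1)) * gStir (1/(α-1)*t) ^ 2 := by
    have h1 := Real.rpow_pos_of_pos ha ((1:ℝ)/(α+1))
    have h2 := Real.rpow_pos_of_pos hCa (-t)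
    have h3 := Real.rpow_pos_of_pos ht0 (-(α/(α+1)))
    have h4 := Real.rpow_pos_of_pos hβ (α/(α+1))
    positivity
  rw [← Real.exp_log hL, ← Real.exp_log hR]
  congr 1
  have hrp1 : (0:ℝ) < (α+1)^(α/(1-α)) := Real.rpow_pos_of_pos hb _
  have e1 : log ((α+1) ^ (t/(1-α))) = t/(1-α) * log (α+1) := Real.log_rpow hb _
  have e2 : log ((α+1)/(α-1)*t) = log (α+1) - log (α-1) + log t := by
    rw [Real.log_mul (by positivity) (ne_of_gt ht0), Real.log_div (ne_of_gt hb) (ne_of_gt ha)]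
  have e3 : log (1/(α-1)*t) = log t - log (α-1) := by
    rw [Real.log_mul (by positivity) (ne_of_gt ht0), Real.log_div one_ne_zero (ne_of_gt ha),
      Real.log_one]
    ring
  have e4 : log (((α-1)*(α+1)^(α/(1-α))) ^ (-t)) = -t * (log (α-1) + α/(1-α) * log (α+1)) := by
    rw [Real.log_rpow hCa, Real.log_mul (ne_of_gt ha) (ne_of_gt hrp1), Real.log_rpow hb]
  have e5 : log (Real.sqrt (α^2-1)) = (log (α-1) + log (α+1))/2 := by
    rw [show α^2-1 = (α-1)*(α+1) by ring, Real.log_sqrt (by positivity),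
      Real.log_mul (ne_of_gt ha) (ne_of_gt hb)]
  have e6 : log (2*π*(α-1) ^ ((1:ℝ)/(α+1)))
      = Real.log 2 + log π + (1:ℝ)/(α+1) * log (α-1) := by
    rw [Real.log_mul (by positivity) (ne_of_gt (Real.rpow_pos_of_pos ha _)),
      Real.log_rpow ha, Real.log_mul (by norm_num) (ne_of_gt pi_pos)]
  have e7 : log (t ^ (-(α/(α+1)))) = -(α/(α+1)) * log t := Real.log_rpow ht0 _
  have e8 : log ((1/(α-1)*t) ^ (α/(α+1))) = α/(α+1) * (log t - log (α-1)) := by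
    rw [Real.log_rpow hβ, e3]
  rw [Real.log_mul (by positivity) (ne_of_gt hβ),
    Real.log_mul (ne_of_gt (Real.rpow_pos_of_pos hb _)) (ne_of_gt hgγ),
    Real.log_mul (by positivity) (ne_of_gt (pow_pos hgβ 2)),
    Real.log_mul (by positivity) (ne_of_gt (Real.rpow_pos_of_pos hβ _)),
    Real.log_mul (by positivity) (ne_of_gt hgt),
    Real.log_mul (by positivity) (ne_of_gt (Real.rpow_pos_of_pos ht0 _)),
    Real.log_mul (by positivity) (ne_of_gt (Real.rpow_pos_of_pos hCa _)),
    Real.log_div (ne_of_gt hsq) (by positivity),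
    Real.log_pow, log_gStir hγ, log_gStir hβ, log_gStir ht0, e1, e2, e3, e4, e5, e6, e7, e8]
  have h1α : 1 - α ≠ 0 := by linarith
  field_simp
  ring

/-- The Taylor coefficients `a_n` of the moment generating function of
`𝒳_α = 𝒜_α^{1/(1-α)}`. -/
noncomputable def mgfCoef (α : ℝ) (n : ℕ) : ℝ :=
  (α+1) ^ ((n:ℝ)/(1-α)) * Real.Gamma (α/(α+1)) * Real.Gamma (1 + (α+1)*(n:ℝ)/(α-1)) /
    ((n.factorial : ℝ) * Real.Gamma (α/(α+1) + (n:ℝ)/(α-1)) * Real.Gamma (1 + (n:ℝ)/(α-1)))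

set_option maxHeartbeats 2000000 in
/-- Asymptotics of the Taylor coefficients of the moment generating function of `𝒳_α`:
`a_n ~ (Γ(α/(α+1)) √(α²-1) / (2π (α-1)^{1/(α+1)})) c_α^{-n} n^{-α/(α+1)}` where
`c_α = (α-1)(α+1)^{α/(1-α)}`. -/
theorem mgf_coefficients_asymptotics
    {α : ℝ} (hα1 : 1 < α) (hα2 : α < 2) :
    Tendsto (fun n : ℕ => mgfCoef α n /
        (Real.Gamma (α/(α+1)) * Real.sqrt (α^2-1) /
            (2 * Real.pi * (α-1) ^ ((1:ℝ)/(α+1))) *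
          ((α-1)*(α+1)^(α/(1-α))) ^ (-(n:ℝ)) * (n:ℝ) ^ (-α/(α+1))))
      atTop (nhds 1) := by
  have ha : 0 < α - 1 := by linarith
  have hb : 0 < α + 1 := by linarith
  have hγ0 : 0 < (α+1)/(α-1) := by positivity
  have hβ0 : 0 < 1/(α-1) := by positivity
  have hc0 : (0:ℝ) ≤ α/(α+1) := by positivity
  have hc1 : α/(α+1) ≤ 1 := by rw [div_le_one hb]; linarith
  have hnat : Tendsto (fun n : ℕ => (n:ℝ)) atTop atTop := tendsto_natCast_atTop_atTop
  have hγn : Tendsto (fun n : ℕ => (α+1)/(α-1)*(n:ℝ)) atTop atTop :=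
    Tendsto.const_mul_atTop hγ0 hnat
  have hβn : Tendsto (fun n : ℕ => 1/(α-1)*(n:ℝ)) atTop atTop :=
    Tendsto.const_mul_atTop hβ0 hnat
  have T1 : Tendsto (fun n : ℕ => Gamma (1 + (α+1)/(α-1)*(n:ℝ)) / gStir ((α+1)/(α-1)*(n:ℝ)))
      atTop (𝓝 1) := by
    have := gamma_stirling.comp hγn
    simpa [Function.comp_def] using this
  have T2 : Tendsto (fun n : ℕ => Gamma (1 + 1/(α-1)*(n:ℝ)) / gStir (1/(α-1)*(n:ℝ)))
      atTop (𝓝 1) := by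
    have := gamma_stirling.comp hβn
    simpa [Function.comp_def] using this
  have T3 : Tendsto (fun n : ℕ => Gamma (1/(α-1)*(n:ℝ) + α/(α+1)) /
      (Gamma (1/(α-1)*(n:ℝ)) * (1/(α-1)*(n:ℝ)) ^ (α/(α+1)))) atTop (𝓝 1) := by
    have := (wendel_tendsto hc0 hc1).comp hβn
    simpa [Function.comp_def] using this
  have T4 := fact_stirling
  have hP : Tendsto (fun n : ℕ =>
      (Gamma (1 + (α+1)/(α-1)*(n:ℝ)) / gStir ((α+1)/(α-1)*(n:ℝ))) *
      ((n.factorial : ℝ) / gStir n)⁻¹ *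
      (Gamma (1/(α-1)*(n:ℝ) + α/(α+1)) /
        (Gamma (1/(α-1)*(n:ℝ)) * (1/(α-1)*(n:ℝ)) ^ (α/(α+1))))⁻¹ *
      ((Gamma (1 + 1/(α-1)*(n:ℝ)) / gStir (1/(α-1)*(n:ℝ)))⁻¹ *
       (Gamma (1 + 1/(α-1)*(n:ℝ)) / gStir (1/(α-1)*(n:ℝ)))⁻¹)) atTop (𝓝 1) := by
    have := ((T1.mul (T4.inv₀ one_ne_zero)).mul (T3.inv₀ one_ne_zero)).mul
      ((T2.inv₀ one_ne_zero).mul (T2.inv₀ one_ne_zero))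
    simpa using this
  refine hP.congr' ?_
  filter_upwards [eventually_ge_atTop 1] with n hn
  have ht : (1:ℝ) ≤ (n:ℝ) := by exact_mod_cast hn
  have ht0 : (0:ℝ) < (n:ℝ) := by linarith
  have hγt : 0 < (α+1)/(α-1)*(n:ℝ) := by positivity
  have hβt : 0 < 1/(α-1)*(n:ℝ) := by positivity
  have hG1 : 0 < Gamma (1 + (α+1)/(α-1)*(n:ℝ)) := Gamma_pos_of_pos (by linarith)
  have hGc : 0 < Gamma (1/(α-1)*(n:ℝ) + α/(α+1)) := Gamma_pos_of_pos (by positivity)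
  have hGβ : 0 < Gamma (1/(α-1)*(n:ℝ)) := Gamma_pos_of_pos hβt
  have hGC : 0 < Gamma (α/(α+1)) := Gamma_pos_of_pos (by positivity)
  have hF : (0:ℝ) < (n.factorial : ℝ) := by exact_mod_cast n.factorial_pos
  have hgγ : 0 < gStir ((α+1)/(α-1)*(n:ℝ)) := gStir_pos hγt
  have hgβ : 0 < gStir (1/(α-1)*(n:ℝ)) := gStir_pos hβt
  have hgt : 0 < gStir (n:ℝ) := gStir_pos ht0
  have hbc : 0 < (1/(α-1)*(n:ℝ)) ^ (α/(α+1)) := Real.rpow_pos_of_pos hβt _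
  have hCa : 0 < (α-1)*(α+1)^(α/(1-α)) := by
    have := Real.rpow_pos_of_pos hb (α/(1-α)); positivity
  have hCat : 0 < ((α-1)*(α+1)^(α/(1-α))) ^ (-(n:ℝ)) := Real.rpow_pos_of_pos hCa _
  have htc : 0 < (n:ℝ) ^ (-α/(α+1)) := Real.rpow_pos_of_pos ht0 _
  have hsq : 0 < Real.sqrt (α^2-1) := Real.sqrt_pos.mpr (by nlinarith)
  have hrp : 0 < (α-1) ^ ((1:ℝ)/(α+1)) := Real.rpow_pos_of_pos ha _
  have hX : (α+1) ^ ((n:ℝ)/(1-α))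
      = (Real.sqrt (α^2-1) / (2*π*(α-1) ^ ((1:ℝ)/(α+1))) * ((α-1)*(α+1)^(α/(1-α))) ^ (-(n:ℝ))
          * (n:ℝ) ^ (-(α/(α+1))) * gStir (n:ℝ) * (1/(α-1)*(n:ℝ)) ^ (α/(α+1))
          * gStir (1/(α-1)*(n:ℝ)) ^ 2)
        / (gStir ((α+1)/(α-1)*(n:ℝ)) * (1/(α-1)*(n:ℝ))) := by
    rw [eq_div_iff (ne_of_gt (mul_pos hgγ hβt))]
    have := key_ident hα1 hα2 ht
    linarith [this]
  have hre1 : 1 + (α+1)*(n:ℝ)/(α-1) = 1 + (α+1)/(α-1)*(n:ℝ) := by ring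
  have hre2 : α/(α+1) + (n:ℝ)/(α-1) = 1/(α-1)*(n:ℝ) + α/(α+1) := by ring
  have hre3 : 1 + (n:ℝ)/(α-1) = 1/(α-1)*(n:ℝ) + 1 := by ring
  have hsign : -α/(α+1) = -(α/(α+1)) := by ring
  rw [mgfCoef, hre1, hre2, hre3, Real.Gamma_add_one (ne_of_gt hβt), hsign]
  have hG1β : Gamma (1 + 1/(α-1)*(n:ℝ)) = 1/(α-1)*(n:ℝ) * Gamma (1/(α-1)*(n:ℝ)) := by
    rw [add_comm, Real.Gamma_add_one (ne_of_gt hβt)]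
  rw [hG1β]
  have htc2 : 0 < (n:ℝ) ^ (-(α/(α+1))) := Real.rpow_pos_of_pos ht0 _
  set B := 1/(α-1)*(n:ℝ) with hBdef
  set G1 := Gamma (1 + (α+1)/(α-1)*(n:ℝ)) with hG1def
  set Gc := Gamma (B + α/(α+1)) with hGcdef
  set Gb := Gamma B with hGbdef
  set GC := Gamma (α/(α+1)) with hGCdef
  set F := (n.factorial : ℝ) with hFdef
  set g1 := gStir ((α+1)/(α-1)*(n:ℝ)) with hg1def
  set gb := gStir B with hgbdef
  set gt := gStir (n:ℝ) with hgtdef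
  set bc := B ^ (α/(α+1)) with hbcdef
  set Can := ((α-1)*(α+1)^(α/(1-α))) ^ (-(n:ℝ)) with hCandef
  set tc := (n:ℝ) ^ (-(α/(α+1))) with htcdef
  set sq := Real.sqrt (α^2-1) with hsqdef
  set rp := (α-1) ^ ((1:ℝ)/(α+1)) with hrpdef
  rw [hX]
  have h2π : (0:ℝ) < 2*π*rp := by positivity
  field_simp
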